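/- Let G=(V,E) be a finite simple undirected graph with m=|E| edges, let 0 < p_e < 1 for all e ∈ E and 0 < λ_v ≤ 1 for all v ∈ V, and let π_wrc be the weighted random cluster distribution with edge parameters p and vertex weights λ. Let P_EF be the lazy edge-flipping (Metropolis) dynamics for π_wrc, and let P_SB be the lazy single-bond dynamics. Then for all S, S' ⊆ E with S ≠ S', P_SB(S,S') ≥ P_EF(S,S')/3. -/
import Mathlib


open Finset
open scoped Classical

noncomputable section

variable {V : Type*} [Fintype V] [DecidableEq V]

/-- The vertex set of the connected component of `v` in the graph `(V, S)`. -/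
def compOf (S : Finset (Sym2 V)) (v : V) : Finset V :=
  Finset.univ.filter fun u => (SimpleGraph.fromEdgeSet (↑S : Set (Sym2 V))).Reachable v u

/-- `κ(V,S)`: the set of vertex sets of connected components of the graph `(V, S)`. -/
def kappa (S : Finset (Sym2 V)) : Finset (Finset V) :=
  Finset.univ.image (compOf S)

/-- `∏_{C ∈ κ(V,S)} (1 + ∏_{u ∈ C} λ_u)`. -/
def clusterProd (S : Finset (Sym2 V)) (lam : V → ℝ) : ℝ :=
  ∏ C ∈ kappa S, (1 + ∏ u ∈ C, lam u)

/-- Weight of an edge subset `S ⊆ E₀` in the weighted random cluster model. -/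
def wtWRC (E₀ : Finset (Sym2 V)) (q : Sym2 V → ℝ) (lam : V → ℝ) (S : Finset (Sym2 V)) : ℝ :=
  (∏ e ∈ S, q e) * (∏ f ∈ E₀ \ S, (1 - q f)) * clusterProd S lam

/-- Partition function of the weighted random cluster model. -/
def ZWRC (E₀ : Finset (Sym2 V)) (q : Sym2 V → ℝ) (lam : V → ℝ) : ℝ :=
  ∑ S ∈ E₀.powerset, wtWRC E₀ q lam S

/-- The weighted random cluster distribution. -/
def piWRC (E₀ : Finset (Sym2 V)) (q : Sym2 V → ℝ) (lam : V → ℝ) (S : Finset (Sym2 V)) : ℝ :=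
  wtWRC E₀ q lam S / ZWRC E₀ q lam

/-- The monochromatic edges of a spin configuration `σ`. -/
def monoEdges (E₀ : Finset (Sym2 V)) (σ : V → Bool) : Finset (Sym2 V) :=
  E₀.filter fun e => (e.map σ).IsDiag

/-- Weight of a spin configuration in the Ising model. -/
def wtIsing (E₀ : Finset (Sym2 V)) (β : Sym2 V → ℝ) (lam : V → ℝ) (σ : V → Bool) : ℝ :=
  (∏ e ∈ monoEdges E₀ σ, β e) * ∏ v : V, (if σ v then lam v else 1)

/-- Ising partition function. -/
def ZIsing (E₀ : Finset (Sym2 V)) (β : Sym2 V → ℝ) (lam : V → ℝ) : ℝ :=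
  ∑ σ : V → Bool, wtIsing E₀ β lam σ

/-- Ising Gibbs distribution. -/
def piIsing (E₀ : Finset (Sym2 V)) (β : Sym2 V → ℝ) (lam : V → ℝ) (σ : V → Bool) : ℝ :=
  wtIsing E₀ β lam σ / ZIsing E₀ β lam

/-- Vertices of odd degree in the graph `(V, S)`. -/
def oddVerts (S : Finset (Sym2 V)) : Finset V :=
  Finset.univ.filter fun v => Odd (S.filter fun e => v ∈ e).card

/-- Weight of an edge subset in the subgraph-world model. -/
def wtSG (E₀ : Finset (Sym2 V)) (p : Sym2 V → ℝ) (η : V → ℝ) (S : Finset (Sym2 V)) : ℝ :=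
  (∏ e ∈ S, p e) * (∏ f ∈ E₀ \ S, (1 - p f)) * ∏ v ∈ oddVerts S, η v

/-- Subgraph-world partition function. -/
def ZSG (E₀ : Finset (Sym2 V)) (p : Sym2 V → ℝ) (η : V → ℝ) : ℝ :=
  ∑ S ∈ E₀.powerset, wtSG E₀ p η S

/-- Subgraph-world distribution. -/
def piSG (E₀ : Finset (Sym2 V)) (p : Sym2 V → ℝ) (η : V → ℝ) (S : Finset (Sym2 V)) : ℝ :=
  wtSG E₀ p η S / ZSG E₀ p η

/-- The transformation `P_{I→R}` from Ising configurations to edge subsets. -/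
def PIR (E₀ : Finset (Sym2 V)) (β : Sym2 V → ℝ) (σ : V → Bool) (S : Finset (Sym2 V)) : ℝ :=
  if S ⊆ monoEdges E₀ σ then
    (∏ e ∈ S, (1 - (β e)⁻¹)) * ∏ f ∈ monoEdges E₀ σ \ S, (β f)⁻¹
  else 0

/-- The transformation `P_{R→I}` from edge subsets to Ising configurations. -/
def PRI (E₀ : Finset (Sym2 V)) (lam : V → ℝ) (S : Finset (Sym2 V)) (σ : V → Bool) : ℝ :=
  if S ⊆ monoEdges E₀ σ then
    ∏ C ∈ kappa S, ((∏ v ∈ C, if σ v then lam v else 1) / (1 + ∏ v ∈ C, lam v))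
  else 0

/-- Swendsen-Wang dynamics for the Ising model: `P_{I→R} ⬝ P_{R→I}`. -/
def PSWIsing (E₀ : Finset (Sym2 V)) (β : Sym2 V → ℝ) (lam : V → ℝ) (σ τ : V → Bool) : ℝ :=
  ∑ S ∈ E₀.powerset, PIR E₀ β σ S * PRI E₀ lam S τ

/-- Swendsen-Wang dynamics for the weighted random cluster model: `P_{R→I} ⬝ P_{I→R}`. -/
def PSWwrc (E₀ : Finset (Sym2 V)) (β : Sym2 V → ℝ) (lam : V → ℝ)
    (S S' : Finset (Sym2 V)) : ℝ :=
  ∑ σ : V → Bool, PRI E₀ lam S σ * PIR E₀ β σ S'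

/-- Lazy edge-flipping (Metropolis) dynamics for a distribution `pi` on subsets of `E₀`. -/
def PEF (E₀ : Finset (Sym2 V)) (pi : Finset (Sym2 V) → ℝ) (x y : Finset (Sym2 V)) : ℝ :=
  if x = y then
    1 - (1 / (2 * (E₀.card : ℝ))) * ∑ e ∈ E₀, min 1 (pi (symmDiff x {e}) / pi x)
  else if (symmDiff x y).card = 1 then
    (1 / (2 * (E₀.card : ℝ))) * min 1 (pi y / pi x)
  else 0

/-- Variance of `f` with respect to a distribution `pi` supported on `states`. -/
def varOn {α : Type*} (states : Finset α) (pi f : α → ℝ) : ℝ :=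
  (∑ x ∈ states, pi x * f x ^ 2) - (∑ x ∈ states, pi x * f x) ^ 2

/-- Dirichlet form of a Markov kernel `P` with stationary distribution `pi` on `states`. -/
def dirichletOn {α : Type*} (states : Finset α) (pi : α → ℝ) (P : α → α → ℝ) (f : α → ℝ) : ℝ :=
  ∑ x ∈ states, pi x * f x * (f x - ∑ y ∈ states, P x y * f y)

/-- Spectral gap of a reversible Markov kernel `P` with stationary distribution `pi`. -/
def gapOn {α : Type*} (states : Finset α) (pi : α → ℝ) (P : α → α → ℝ) : ℝ :=
  sInf ((fun f : α → ℝ => dirichletOn states pi P f / varOn states pi f) ''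
    {f | varOn states pi f ≠ 0})

/-- Total variation distance between two distributions on `states`. -/
def dTV {α : Type*} (states : Finset α) (μ ν : α → ℝ) : ℝ :=
  (1 / 2) * ∑ z ∈ states, |μ z - ν z|

/-- `t`-step transition probabilities of the Markov kernel `P` on state space `states`. -/
def kpow {α : Type*} (states : Finset α) (P : α → α → ℝ) : ℕ → α → α → ℝ
  | 0 => fun x y => if x = y then 1 else 0
  | (t + 1) => fun x y => ∑ z ∈ states, P x z * kpow states P t z y


/-- The endpoints of `e` lie in the same connected component of `(V, S)`. -/
def sameComp (S : Finset (Sym2 V)) (e : Sym2 V) : Prop :=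
  ∀ u ∈ e, ∀ v ∈ e, (SimpleGraph.fromEdgeSet (↑S : Set (Sym2 V))).Reachable u v

/-- Probability of adding edge `e` in the single-bond dynamics when its endpoints lie in
different components: `p_e (1 + ∏_{C_u ∪ C_v} λ) / ((1 + ∏_{C_u} λ)(1 + ∏_{C_v} λ))`. -/
def rProb (S : Finset (Sym2 V)) (lam : V → ℝ) (pe : ℝ) (e : Sym2 V) : ℝ :=
  Sym2.lift ⟨fun u v =>
    pe * (1 + (∏ w ∈ compOf S u, lam w) * (∏ w ∈ compOf S v, lam w)) /
      ((1 + ∏ w ∈ compOf S u, lam w) * (1 + ∏ w ∈ compOf S v, lam w)),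
    fun u v => by ring_nf⟩ e

/-- Distribution of the next state in the single-bond dynamics after edge `e` is picked. -/
def sbStep (p : Sym2 V → ℝ) (lam : V → ℝ) (S : Finset (Sym2 V)) (e : Sym2 V)
    (S' : Finset (Sym2 V)) : ℝ :=
  if sameComp S e then
    (if S' = S ∪ {e} then p e else 0) + (if S' = S \ {e} then 1 - p e else 0)
  else
    (if S' = S ∪ {e} then rProb S lam (p e) e else 0) +
      (if S' = S then 1 - rProb S lam (p e) e else 0)

/-- The lazy single-bond dynamics for the weighted random cluster model: with probability
`1/2` stay put, otherwise pick a uniform random edge and resample it. -/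
def PSB (E₀ : Finset (Sym2 V)) (p : Sym2 V → ℝ) (lam : V → ℝ)
    (S S' : Finset (Sym2 V)) : ℝ :=
  (if S = S' then (1 : ℝ) / 2 else 0) +
    (1 / (2 * (E₀.card : ℝ))) * ∑ e ∈ E₀, sbStep p lam S e S'

section AuxLemmas

open SimpleGraph

variable {S T : Finset (Sym2 V)} {u v w : V}

lemma mem_compOf {x : V} :
    x ∈ compOf S v ↔ (fromEdgeSet (↑S : Set (Sym2 V))).Reachable v x := by
  simp [compOf]

lemma compOf_eq_of_reachable (h : (fromEdgeSet (↑S : Set (Sym2 V))).Reachable v w) :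
    compOf S v = compOf S w := by
  ext x
  simp only [mem_compOf]
  exact ⟨fun h' => h.symm.trans h', fun h' => h.trans h'⟩

lemma reachable_of_compOf_eq (h : compOf S v = compOf S w) :
    (fromEdgeSet (↑S : Set (Sym2 V))).Reachable v w := by
  have : w ∈ compOf S w := mem_compOf.mpr (Reachable.refl w)
  rw [← h] at this
  exact mem_compOf.mp this

lemma reach_union_iff (hne : u ≠ v) (a b : V) :
    (fromEdgeSet (↑(S ∪ {s(u,v)}) : Set (Sym2 V))).Reachable a b ↔
      (fromEdgeSet (↑S : Set (Sym2 V))).Reachable a b ∨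
        ((fromEdgeSet (↑S : Set (Sym2 V))).Reachable a u ∧
          (fromEdgeSet (↑S : Set (Sym2 V))).Reachable v b) ∨
        ((fromEdgeSet (↑S : Set (Sym2 V))).Reachable a v ∧
          (fromEdgeSet (↑S : Set (Sym2 V))).Reachable u b) := by
  constructor
  · rintro ⟨wk⟩
    induction wk with
    | nil => exact Or.inl (Reachable.refl _)
    | @cons x z y hadj wk ih =>
      rw [fromEdgeSet_adj] at hadj
      obtain ⟨hmem, hxz⟩ := hadj
      have hmem' : (x = u ∧ z = v ∨ x = v ∧ z = u) ∨ s(x, z) ∈ S := by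
        simpa using hmem
      rcases hmem' with h | h
      case _ =>
        rcases h with ⟨rfl, rfl⟩ | ⟨rfl, rfl⟩
        · rcases ih with h1 | ⟨h1, h2⟩ | ⟨h1, h2⟩
          · exact Or.inr (Or.inl ⟨Reachable.refl _, h1⟩)
          · exact Or.inl (h1.symm.trans h2)
          · exact Or.inl h2
        · rcases ih with h1 | ⟨h1, h2⟩ | ⟨h1, h2⟩
          · exact Or.inr (Or.inr ⟨Reachable.refl _, h1⟩)
          · exact Or.inl h2
          · exact Or.inl (h1.symm.trans h2)
      · have hxz' : (fromEdgeSet (↑S : Set (Sym2 V))).Reachable x z :=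
          ((fromEdgeSet_adj _).mpr ⟨by simpa using h, hxz⟩).reachable
        rcases ih with h1 | ⟨h1, h2⟩ | ⟨h1, h2⟩
        · exact Or.inl (hxz'.trans h1)
        · exact Or.inr (Or.inl ⟨hxz'.trans h1, h2⟩)
        · exact Or.inr (Or.inr ⟨hxz'.trans h1, h2⟩)
  · have hmono : (fromEdgeSet (↑S : Set (Sym2 V))) ≤
        fromEdgeSet (↑(S ∪ {s(u,v)}) : Set (Sym2 V)) :=
      fromEdgeSet_mono (by simp)
    have hadj : (fromEdgeSet (↑(S ∪ {s(u,v)}) : Set (Sym2 V))).Adj u v :=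
      (fromEdgeSet_adj _).mpr ⟨by simp, hne⟩
    rintro (h | ⟨h1, h2⟩ | ⟨h1, h2⟩)
    · exact h.mono hmono
    · exact ((h1.mono hmono).trans hadj.reachable).trans (h2.mono hmono)
    · exact ((h1.mono hmono).trans hadj.symm.reachable).trans (h2.mono hmono)

lemma compOf_union_same (hne : u ≠ v)
    (h : (fromEdgeSet (↑S : Set (Sym2 V))).Reachable u v) (w : V) :
    compOf (S ∪ {s(u,v)}) w = compOf S w := by
  ext x
  simp only [mem_compOf, reach_union_iff hne]
  constructor
  · rintro (h1 | ⟨h1, h2⟩ | ⟨h1, h2⟩)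
    · exact h1
    · exact (h1.trans h).trans h2
    · exact (h1.trans h.symm).trans h2
  · exact Or.inl

lemma clusterProd_union_same (hne : u ≠ v)
    (h : (fromEdgeSet (↑S : Set (Sym2 V))).Reachable u v) (lam : V → ℝ) :
    clusterProd (S ∪ {s(u,v)}) lam = clusterProd S lam := by
  unfold clusterProd kappa
  rw [show compOf (S ∪ {s(u,v)}) = compOf S from funext (compOf_union_same hne h)]

section Merge

variable (hne : u ≠ v) (hnr : ¬ (fromEdgeSet (↑S : Set (Sym2 V))).Reachable u v)

include hne hnr

lemma compOf_union_left (hw : (fromEdgeSet (↑S : Set (Sym2 V))).Reachable w u) :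
    compOf (S ∪ {s(u,v)}) w = compOf S u ∪ compOf S v := by
  ext x
  simp only [mem_compOf, reach_union_iff hne, Finset.mem_union]
  constructor
  · rintro (h1 | ⟨h1, h2⟩ | ⟨h1, h2⟩)
    · exact Or.inl (hw.symm.trans h1)
    · exact Or.inr h2
    · exact absurd (hw.symm.trans h1) hnr
  · rintro (h | h)
    · exact Or.inl (hw.trans h)
    · exact Or.inr (Or.inl ⟨hw, h⟩)

lemma compOf_union_right (hw : (fromEdgeSet (↑S : Set (Sym2 V))).Reachable w v) :
    compOf (S ∪ {s(u,v)}) w = compOf S u ∪ compOf S v := by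
  have := compOf_union_left (S := S) hne.symm (fun h => hnr h.symm) hw
  rw [Sym2.eq_swap] at this
  rw [this, Finset.union_comm]

lemma compOf_union_other (h1 : ¬ (fromEdgeSet (↑S : Set (Sym2 V))).Reachable w u)
    (h2 : ¬ (fromEdgeSet (↑S : Set (Sym2 V))).Reachable w v) :
    compOf (S ∪ {s(u,v)}) w = compOf S w := by
  ext x
  simp only [mem_compOf, reach_union_iff hne]
  constructor
  · rintro (h | ⟨ha, hb⟩ | ⟨ha, hb⟩)
    · exact h
    · exact absurd ha h1
    · exact absurd ha h2
  · exact Or.inl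

lemma kappa_union_merge :
    kappa (S ∪ {s(u,v)}) =
      insert (compOf S u ∪ compOf S v)
        (((kappa S).erase (compOf S u)).erase (compOf S v)) := by
  ext C
  simp only [kappa, Finset.mem_image, Finset.mem_univ, true_and, Finset.mem_insert,
    Finset.mem_erase]
  constructor
  · rintro ⟨w, rfl⟩
    by_cases hwu : (fromEdgeSet (↑S : Set (Sym2 V))).Reachable w u
    · exact Or.inl (compOf_union_left hne hnr hwu)
    by_cases hwv : (fromEdgeSet (↑S : Set (Sym2 V))).Reachable w v
    · exact Or.inl (compOf_union_right hne hnr hwv)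
    · rw [compOf_union_other hne hnr hwu hwv]
      exact Or.inr ⟨fun h => hwv (reachable_of_compOf_eq h),
        fun h => hwu (reachable_of_compOf_eq h), w, rfl⟩
  · rintro (rfl | ⟨hCv, hCu, w, rfl⟩)
    · exact ⟨u, compOf_union_left hne hnr (Reachable.refl u)⟩
    · exact ⟨w, compOf_union_other hne hnr
        (fun h => hCu (compOf_eq_of_reachable h)) (fun h => hCv (compOf_eq_of_reachable h))⟩

lemma merge_not_mem :
    compOf S u ∪ compOf S v ∉ ((kappa S).erase (compOf S u)).erase (compOf S v) := by
  simp only [kappa, Finset.mem_erase, Finset.mem_image, Finset.mem_univ, true_and, not_and]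
  rintro hCv hCu ⟨w, hw⟩
  have hv : v ∈ compOf S w := by
    rw [hw]
    exact Finset.mem_union_right _ (mem_compOf.mpr (Reachable.refl v))
  have hwv : (fromEdgeSet (↑S : Set (Sym2 V))).Reachable w v := mem_compOf.mp hv
  have hcv : compOf S w = compOf S v := compOf_eq_of_reachable hwv
  have hu : u ∈ compOf S v := by
    rw [← hcv, hw]
    exact Finset.mem_union_left _ (mem_compOf.mpr (Reachable.refl u))
  exact hnr (mem_compOf.mp hu).symm

lemma disjoint_compOf : Disjoint (compOf S u) (compOf S v) := by
  rw [Finset.disjoint_left]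
  intro x hxu hxv
  exact hnr ((mem_compOf.mp hxu).trans (mem_compOf.mp hxv).symm)

lemma compOf_u_mem : compOf S u ∈ kappa S := by
  simp only [kappa, Finset.mem_image, Finset.mem_univ, true_and]
  exact ⟨u, rfl⟩

lemma compOf_v_mem_erase : compOf S v ∈ (kappa S).erase (compOf S u) := by
  refine Finset.mem_erase.mpr ⟨fun h => hnr (reachable_of_compOf_eq h).symm, ?_⟩
  simp only [kappa, Finset.mem_image, Finset.mem_univ, true_and]
  exact ⟨v, rfl⟩

lemma clusterProd_union_merge (lam : V → ℝ) :
    clusterProd (S ∪ {s(u,v)}) lam *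
        ((1 + ∏ w ∈ compOf S u, lam w) * (1 + ∏ w ∈ compOf S v, lam w)) =
      clusterProd S lam *
        (1 + (∏ w ∈ compOf S u, lam w) * (∏ w ∈ compOf S v, lam w)) := by
  unfold clusterProd
  rw [kappa_union_merge hne hnr, Finset.prod_insert (merge_not_mem hne hnr),
    Finset.prod_union (disjoint_compOf hne hnr),
    ← Finset.mul_prod_erase (kappa S) (fun C => 1 + ∏ x ∈ C, lam x) (compOf_u_mem hne hnr),
    ← Finset.mul_prod_erase ((kappa S).erase (compOf S u)) (fun C => 1 + ∏ x ∈ C, lam x)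
      (compOf_v_mem_erase hne hnr)]
  ring

end Merge

end AuxLemmas
section AuxLemmas2

open SimpleGraph

variable {E₀ S T : Finset (Sym2 V)} {q : Sym2 V → ℝ} {lam : V → ℝ} {e : Sym2 V} {u v : V}

lemma clusterProd_pos (hlam : ∀ x : V, 0 < lam x) : 0 < clusterProd S lam := by
  refine Finset.prod_pos fun C _ => ?_
  have := Finset.prod_pos (fun x (_ : x ∈ C) => hlam x)
  linarith

lemma wtWRC_pos (hq : ∀ f ∈ E₀, 0 < q f ∧ q f < 1) (hlam : ∀ x : V, 0 < lam x)
    (hS : S ⊆ E₀) : 0 < wtWRC E₀ q lam S := by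
  refine mul_pos (mul_pos ?_ ?_) (clusterProd_pos hlam)
  · exact Finset.prod_pos fun f hf => (hq f (hS hf)).1
  · refine Finset.prod_pos fun f hf => ?_
    have := (hq f (Finset.mem_sdiff.mp hf).1).2
    linarith

lemma ZWRC_pos (hq : ∀ f ∈ E₀, 0 < q f ∧ q f < 1) (hlam : ∀ x : V, 0 < lam x) :
    0 < ZWRC E₀ q lam := by
  refine Finset.sum_pos (fun A hA => wtWRC_pos hq hlam (Finset.mem_powerset.mp hA)) ?_
  exact ⟨∅, Finset.mem_powerset.mpr (Finset.empty_subset _)⟩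

lemma piWRC_ratio (hq : ∀ f ∈ E₀, 0 < q f ∧ q f < 1) (hlam : ∀ x : V, 0 < lam x)
    (A B : Finset (Sym2 V)) :
    piWRC E₀ q lam A / piWRC E₀ q lam B = wtWRC E₀ q lam A / wtWRC E₀ q lam B := by
  unfold piWRC
  rw [div_div_div_comm, div_self (ne_of_gt (ZWRC_pos hq hlam)), div_one]

lemma wt_union_identity (hT : T ⊆ E₀) (he : e ∈ E₀) (heT : e ∉ T) :
    wtWRC E₀ q lam (T ∪ {e}) * (1 - q e) * clusterProd T lam =
      wtWRC E₀ q lam T * q e * clusterProd (T ∪ {e}) lam := by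
  have h1 : T ∪ {e} = insert e T := by ext f; simp [or_comm]
  have hmem : e ∈ E₀ \ T := Finset.mem_sdiff.mpr ⟨he, heT⟩
  have h3 : E₀ \ T = insert e (E₀ \ insert e T) := by
    rw [Finset.sdiff_insert, Finset.insert_erase hmem]
  have h4 : e ∉ E₀ \ insert e T := by simp
  have hq1 : ∏ f ∈ T ∪ {e}, q f = q e * ∏ f ∈ T, q f := by
    rw [h1, Finset.prod_insert heT]
  have hq2 : ∏ f ∈ E₀ \ T, (1 - q f) =
      (1 - q e) * ∏ f ∈ E₀ \ (T ∪ {e}), (1 - q f) := by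
    rw [h3, Finset.prod_insert h4, h1]
  unfold wtWRC
  rw [hq1, hq2]
  ring

lemma sameComp_mk :
    sameComp S s(u, v) ↔ (fromEdgeSet (↑S : Set (Sym2 V))).Reachable u v := by
  constructor
  · intro h
    exact h u (Sym2.mem_mk_left u v) v (Sym2.mem_mk_right u v)
  · intro h x hx y hy
    rcases Sym2.mem_iff.mp hx with rfl | rfl <;> rcases Sym2.mem_iff.mp hy with rfl | rfl
    · exact Reachable.refl _
    · exact h
    · exact h.symm
    · exact Reachable.refl _

lemma arith_add_same {c : ℝ} (h0 : 0 < c) (h1 : c < 1) :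
    min 1 (c / (1 - c)) / 3 ≤ c := by
  rcases le_or_gt c (2/3) with h | h
  · have hd : c / (1 - c) ≤ 3 * c := by
      rw [div_le_iff₀ (by linarith)]
      nlinarith
    have := min_le_right 1 (c / (1 - c))
    linarith
  · have := min_le_left 1 (c / (1 - c))
    linarith

lemma arith_add_merge {c a b : ℝ} (h0 : 0 < c) (h1 : c < 1) (ha0 : 0 < a) (ha1 : a ≤ 1)
    (hb0 : 0 < b) (hb1 : b ≤ 1) :
    min 1 (c * (1 + a * b) / ((1 - c) * ((1 + a) * (1 + b)))) / 3 ≤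
      c * (1 + a * b) / ((1 + a) * (1 + b)) := by
  have hD : (0:ℝ) < (1 + a) * (1 + b) := by nlinarith
  have hN : (0:ℝ) < 1 + a * b := by nlinarith
  rcases le_or_gt c (2/3) with h | h
  · have key : c * (1 + a * b) / ((1 - c) * ((1 + a) * (1 + b))) ≤
        3 * (c * (1 + a * b) / ((1 + a) * (1 + b))) := by
      rw [show 3 * (c * (1 + a * b) / ((1 + a) * (1 + b))) =
          3 * (c * (1 + a * b)) / ((1 + a) * (1 + b)) from by ring,
        div_le_div_iff₀ (by nlinarith) hD]
      nlinarith [mul_nonneg (mul_nonneg (by linarith : (0:ℝ) ≤ 2 - 3 * c)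
        (le_of_lt (mul_pos h0 hN))) hD.le]
    have := min_le_right 1 (c * (1 + a * b) / ((1 - c) * ((1 + a) * (1 + b))))
    linarith
  · have key : (1:ℝ) ≤ 3 * (c * (1 + a * b) / ((1 + a) * (1 + b))) := by
      rw [show 3 * (c * (1 + a * b) / ((1 + a) * (1 + b))) =
          3 * (c * (1 + a * b)) / ((1 + a) * (1 + b)) from by ring, le_div_iff₀ hD]
      nlinarith [mul_nonneg (by linarith : (0:ℝ) ≤ 3 * c - 2) hN.le,
        mul_nonneg (by linarith : (0:ℝ) ≤ 1 - a) (by linarith : (0:ℝ) ≤ 1 - b)]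
    have := min_le_left 1 (c * (1 + a * b) / ((1 - c) * ((1 + a) * (1 + b))))
    linarith

lemma arith_rem_same {c : ℝ} (h0 : 0 < c) (h1 : c < 1) :
    min 1 ((1 - c) / c) / 3 ≤ 1 - c := by
  rcases le_or_gt c (2/3) with h | h
  · have := min_le_left 1 ((1 - c) / c)
    linarith
  · have hd : (1 - c) / c ≤ 3 * (1 - c) := by
      rw [div_le_iff₀ h0]
      nlinarith
    have := min_le_right 1 ((1 - c) / c)
    linarith

lemma arith_rem_merge {c a b : ℝ} (h0 : 0 < c) (h1 : c < 1) (ha0 : 0 < a) (ha1 : a ≤ 1)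
    (hb0 : 0 < b) (hb1 : b ≤ 1) :
    min 1 ((1 - c) * ((1 + a) * (1 + b)) / (c * (1 + a * b))) / 3 ≤ 1 - c := by
  have hN : (0:ℝ) < 1 + a * b := by nlinarith
  rcases le_or_gt c (2/3) with h | h
  · have := min_le_left 1 ((1 - c) * ((1 + a) * (1 + b)) / (c * (1 + a * b)))
    linarith
  · have hstep : (1 + a) * (1 + b) ≤ 3 * c * (1 + a * b) := by
      nlinarith [mul_nonneg (by linarith : (0:ℝ) ≤ 3 * c - 2) hN.le,
        mul_nonneg (by linarith : (0:ℝ) ≤ 1 - a) (by linarith : (0:ℝ) ≤ 1 - b)]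
    have hd : (1 - c) * ((1 + a) * (1 + b)) / (c * (1 + a * b)) ≤ 3 * (1 - c) := by
      rw [div_le_iff₀ (mul_pos h0 hN)]
      nlinarith [mul_nonneg (by linarith : (0:ℝ) ≤ 1 - c)
        (by linarith : (0:ℝ) ≤ 3 * c * (1 + a * b) - (1 + a) * (1 + b))]
    have := min_le_right 1 ((1 - c) * ((1 + a) * (1 + b)) / (c * (1 + a * b)))
    linarith

end AuxLemmas2
section AuxLemmas3

open SimpleGraph

variable {E₀ S T : Finset (Sym2 V)} {q : Sym2 V → ℝ} {lam : V → ℝ} {e : Sym2 V} {u v : V}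

lemma rProb_mk (S : Finset (Sym2 V)) (lam : V → ℝ) (pe : ℝ) (u v : V) :
    rProb S lam pe s(u, v) =
      pe * (1 + (∏ w ∈ compOf S u, lam w) * (∏ w ∈ compOf S v, lam w)) /
        ((1 + ∏ w ∈ compOf S u, lam w) * (1 + ∏ w ∈ compOf S v, lam w)) := rfl

lemma prod_lam_pos (hlam : ∀ x : V, 0 < lam x ∧ lam x ≤ 1) (C : Finset V) :
    0 < ∏ w ∈ C, lam w :=
  Finset.prod_pos fun w _ => (hlam w).1

lemma prod_lam_le_one (hlam : ∀ x : V, 0 < lam x ∧ lam x ≤ 1) (C : Finset V) :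
    ∏ w ∈ C, lam w ≤ 1 :=
  Finset.prod_le_one (fun w _ => (hlam w).1.le) (fun w _ => (hlam w).2)

lemma rProb_bounds (hlam : ∀ x : V, 0 < lam x ∧ lam x ≤ 1) {pe : ℝ}
    (h0 : 0 ≤ pe) (h1 : pe ≤ 1) (S : Finset (Sym2 V)) (e : Sym2 V) :
    0 ≤ rProb S lam pe e ∧ rProb S lam pe e ≤ 1 := by
  induction e using Sym2.inductionOn with
  | hf u v =>
    rw [rProb_mk]
    have ha0 := prod_lam_pos hlam (compOf S u)
    have ha1 := prod_lam_le_one hlam (compOf S u)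
    have hb0 := prod_lam_pos hlam (compOf S v)
    have hb1 := prod_lam_le_one hlam (compOf S v)
    set a := ∏ w ∈ compOf S u, lam w
    set b := ∏ w ∈ compOf S v, lam w
    have hD : (0:ℝ) < (1 + a) * (1 + b) := by nlinarith
    constructor
    · apply div_nonneg _ hD.le
      apply mul_nonneg h0
      nlinarith
    · rw [div_le_one hD]
      nlinarith

lemma sbStep_nonneg (hlam : ∀ x : V, 0 < lam x ∧ lam x ≤ 1)
    (h0 : 0 ≤ q e) (h1 : q e ≤ 1) (S S' : Finset (Sym2 V)) :
    0 ≤ sbStep q lam S e S' := by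
  obtain ⟨hr0, hr1⟩ := rProb_bounds hlam h0 h1 S e
  unfold sbStep
  by_cases h : sameComp S e
  · rw [if_pos h]
    apply add_nonneg
    · split
      · exact h0
      · exact le_refl 0
    · split
      · linarith
      · exact le_refl 0
  · rw [if_neg h]
    apply add_nonneg
    · split
      · exact hr0
      · exact le_refl 0
    · split
      · linarith
      · exact le_refl 0

lemma key_add (hq : ∀ f ∈ E₀, 0 < q f ∧ q f < 1) (hlam : ∀ x : V, 0 < lam x ∧ lam x ≤ 1)
    (hT : T ⊆ E₀) (he : e ∈ E₀) (heT : e ∉ T) (hd : ¬ e.IsDiag) :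
    min 1 (piWRC E₀ q lam (T ∪ {e}) / piWRC E₀ q lam T) / 3 ≤ sbStep q lam T e (T ∪ {e}) := by
  induction e using Sym2.inductionOn with
  | hf u v =>
    have hne : u ≠ v := by simpa [Sym2.mk_isDiag_iff] using hd
    have hlam1 : ∀ x : V, 0 < lam x := fun x => (hlam x).1
    obtain ⟨hq0, hq1⟩ := hq _ he
    have hW : 0 < wtWRC E₀ q lam T := wtWRC_pos hq hlam1 hT
    have hTe : T ∪ {s(u, v)} ⊆ E₀ := Finset.union_subset hT (by simpa using he)
    have hW' : 0 < wtWRC E₀ q lam (T ∪ {s(u, v)}) := wtWRC_pos hq hlam1 hTe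
    have hid := wt_union_identity (q := q) (lam := lam) hT he heT
    have hcpT : 0 < clusterProd T lam := clusterProd_pos hlam1
    rw [piWRC_ratio hq hlam1]
    by_cases hc : (fromEdgeSet (↑T : Set (Sym2 V))).Reachable u v
    · have hsb : sbStep q lam T s(u, v) (T ∪ {s(u, v)}) = q s(u, v) := by
        unfold sbStep
        rw [if_pos (sameComp_mk.mpr hc), if_pos rfl, if_neg ?_, add_zero]
        intro hEq
        have : s(u, v) ∈ T \ {s(u, v)} :=
          hEq ▸ Finset.mem_union_right _ (Finset.mem_singleton_self _)
        simp at this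
      have hcp : clusterProd (T ∪ {s(u, v)}) lam = clusterProd T lam :=
        clusterProd_union_same hne hc lam
      have hratio : wtWRC E₀ q lam (T ∪ {s(u, v)}) / wtWRC E₀ q lam T =
          q s(u, v) / (1 - q s(u, v)) := by
        rw [div_eq_div_iff hW.ne' (by linarith)]
        rw [hcp] at hid
        have h2 := mul_right_cancel₀ hcpT.ne' hid
        exact h2.trans (mul_comm _ _)
      rw [hsb, hratio]
      exact arith_add_same hq0 hq1
    · have hsb : sbStep q lam T s(u, v) (T ∪ {s(u, v)}) =
          rProb T lam (q s(u, v)) s(u, v) := by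
        unfold sbStep
        rw [if_neg (fun h => hc (sameComp_mk.mp h)), if_pos rfl, if_neg ?_, add_zero]
        exact fun hEq => heT (hEq ▸ Finset.mem_union_right _ (Finset.mem_singleton_self _))
      have ha0 := prod_lam_pos hlam (compOf T u)
      have ha1 := prod_lam_le_one hlam (compOf T u)
      have hb0 := prod_lam_pos hlam (compOf T v)
      have hb1 := prod_lam_le_one hlam (compOf T v)
      have hcpm := clusterProd_union_merge hne hc lam
      set a := ∏ w ∈ compOf T u, lam w
      set b := ∏ w ∈ compOf T v, lam w
      have hratio : wtWRC E₀ q lam (T ∪ {s(u, v)}) / wtWRC E₀ q lam T =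
          q s(u, v) * (1 + a * b) / ((1 - q s(u, v)) * ((1 + a) * (1 + b))) := by
        rw [div_eq_div_iff hW.ne' (mul_pos (by linarith)
          (mul_pos (by linarith) (by linarith)) : (0:ℝ) <
          (1 - q s(u, v)) * ((1 + a) * (1 + b))).ne']
        apply mul_right_cancel₀ hcpT.ne'
        calc wtWRC E₀ q lam (T ∪ {s(u, v)}) *
              ((1 - q s(u, v)) * ((1 + a) * (1 + b))) * clusterProd T lam
            = wtWRC E₀ q lam (T ∪ {s(u, v)}) * (1 - q s(u, v)) * clusterProd T lam *
              ((1 + a) * (1 + b)) := by ring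
          _ = wtWRC E₀ q lam T * q s(u, v) * clusterProd (T ∪ {s(u, v)}) lam *
              ((1 + a) * (1 + b)) := by rw [hid]
          _ = wtWRC E₀ q lam T * q s(u, v) *
              (clusterProd (T ∪ {s(u, v)}) lam * ((1 + a) * (1 + b))) := by ring
          _ = wtWRC E₀ q lam T * q s(u, v) * (clusterProd T lam * (1 + a * b)) := by
              rw [hcpm]
          _ = q s(u, v) * (1 + a * b) * wtWRC E₀ q lam T * clusterProd T lam := by ring
      rw [hsb, hratio, rProb_mk]
      exact arith_add_merge hq0 hq1 ha0 ha1 hb0 hb1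

lemma key_rem (hq : ∀ f ∈ E₀, 0 < q f ∧ q f < 1) (hlam : ∀ x : V, 0 < lam x ∧ lam x ≤ 1)
    (hT : T ⊆ E₀) (he : e ∈ E₀) (heT : e ∉ T) (hd : ¬ e.IsDiag) :
    min 1 (piWRC E₀ q lam T / piWRC E₀ q lam (T ∪ {e})) / 3 ≤
      sbStep q lam (T ∪ {e}) e T := by
  induction e using Sym2.inductionOn with
  | hf u v =>
    have hne : u ≠ v := by simpa [Sym2.mk_isDiag_iff] using hd
    have hlam1 : ∀ x : V, 0 < lam x := fun x => (hlam x).1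
    obtain ⟨hq0, hq1⟩ := hq _ he
    have hW : 0 < wtWRC E₀ q lam T := wtWRC_pos hq hlam1 hT
    have hTe : T ∪ {s(u, v)} ⊆ E₀ := Finset.union_subset hT (by simpa using he)
    have hW' : 0 < wtWRC E₀ q lam (T ∪ {s(u, v)}) := wtWRC_pos hq hlam1 hTe
    have hid := wt_union_identity (q := q) (lam := lam) hT he heT
    have hcpT : 0 < clusterProd T lam := clusterProd_pos hlam1
    have hsame : sameComp (T ∪ {s(u, v)}) s(u, v) := by
      refine sameComp_mk.mpr ?_
      exact ((fromEdgeSet_adj _).mpr ⟨by simp, hne⟩).reachable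
    have hsb : sbStep q lam (T ∪ {s(u, v)}) s(u, v) T = 1 - q s(u, v) := by
      unfold sbStep
      rw [if_pos hsame, if_neg ?_, if_pos ?_, zero_add]
      · ext f
        simp only [Finset.mem_sdiff, Finset.mem_union, Finset.mem_singleton]
        constructor
        · intro hf
          exact ⟨Or.inl hf, fun h => heT (h ▸ hf)⟩
        · rintro ⟨hf | rfl, hf2⟩
          · exact hf
          · exact absurd rfl hf2
      · intro hEq
        exact heT (hEq ▸ Finset.mem_union_right _ (Finset.mem_singleton_self _))
    rw [piWRC_ratio hq hlam1, hsb]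
    by_cases hc : (fromEdgeSet (↑T : Set (Sym2 V))).Reachable u v
    · have hcp : clusterProd (T ∪ {s(u, v)}) lam = clusterProd T lam :=
        clusterProd_union_same hne hc lam
      have hratio : wtWRC E₀ q lam T / wtWRC E₀ q lam (T ∪ {s(u, v)}) =
          (1 - q s(u, v)) / q s(u, v) := by
        rw [div_eq_div_iff hW'.ne' (by linarith)]
        rw [hcp] at hid
        have h2 := mul_right_cancel₀ hcpT.ne' hid
        linarith [h2]
      rw [hratio]
      exact arith_rem_same hq0 hq1
    · have ha0 := prod_lam_pos hlam (compOf T u)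
      have ha1 := prod_lam_le_one hlam (compOf T u)
      have hb0 := prod_lam_pos hlam (compOf T v)
      have hb1 := prod_lam_le_one hlam (compOf T v)
      have hcpm := clusterProd_union_merge hne hc lam
      set a := ∏ w ∈ compOf T u, lam w
      set b := ∏ w ∈ compOf T v, lam w
      have hratio : wtWRC E₀ q lam T / wtWRC E₀ q lam (T ∪ {s(u, v)}) =
          (1 - q s(u, v)) * ((1 + a) * (1 + b)) / (q s(u, v) * (1 + a * b)) := by
        rw [div_eq_div_iff hW'.ne' (mul_pos hq0
          (by nlinarith : (0:ℝ) < 1 + a * b)).ne']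
        apply mul_right_cancel₀ hcpT.ne'
        calc wtWRC E₀ q lam T * (q s(u, v) * (1 + a * b)) * clusterProd T lam
            = wtWRC E₀ q lam T * q s(u, v) * (clusterProd T lam * (1 + a * b)) := by ring
          _ = wtWRC E₀ q lam T * q s(u, v) *
              (clusterProd (T ∪ {s(u, v)}) lam * ((1 + a) * (1 + b))) := by rw [hcpm]
          _ = wtWRC E₀ q lam T * q s(u, v) * clusterProd (T ∪ {s(u, v)}) lam *
              ((1 + a) * (1 + b)) := by ring
          _ = wtWRC E₀ q lam (T ∪ {s(u, v)}) * (1 - q s(u, v)) * clusterProd T lam *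
              ((1 + a) * (1 + b)) := by rw [hid]
          _ = (1 - q s(u, v)) * ((1 + a) * (1 + b)) * wtWRC E₀ q lam (T ∪ {s(u, v)}) *
              clusterProd T lam := by ring
      rw [hratio]
      exact arith_rem_merge hq0 hq1 ha0 ha1 hb0 hb1

end AuxLemmas3
/-- Comparison of the single-bond and edge-flipping dynamics for the weighted random cluster
model: `P_SB(S,S') ≥ P_EF(S,S')/3` for all states `S ≠ S'`. -/
theorem single_bond_vs_edge_flip {V : Type*} [Fintype V] [DecidableEq V]
    (G : SimpleGraph V) [DecidableRel G.Adj]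
    (p : Sym2 V → ℝ) (lam : V → ℝ)
    (hp : ∀ e ∈ G.edgeFinset, 0 < p e ∧ p e < 1)
    (hlam : ∀ v : V, 0 < lam v ∧ lam v ≤ 1) :
    ∀ S ∈ G.edgeFinset.powerset, ∀ S' ∈ G.edgeFinset.powerset, S ≠ S' →
      PSB G.edgeFinset p lam S S' ≥
        PEF G.edgeFinset (piWRC G.edgeFinset p lam) S S' / 3 := by
  intro S hS S' hS' hneq
  have hSE : S ⊆ G.edgeFinset := Finset.mem_powerset.mp hS
  have hS'E : S' ⊆ G.edgeFinset := Finset.mem_powerset.mp hS'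
  have hlam1 : ∀ x : V, 0 < lam x := fun x => (hlam x).1
  have hc0 : (0:ℝ) ≤ 1 / (2 * (G.edgeFinset.card : ℝ)) := by positivity
  have hsum_nonneg : ∀ f ∈ G.edgeFinset, 0 ≤ sbStep p lam S f S' := fun f hf =>
    sbStep_nonneg hlam (hp f hf).1.le (hp f hf).2.le S S'
  rw [ge_iff_le, PSB, PEF, if_neg hneq, if_neg hneq, zero_add]
  by_cases hcard : (symmDiff S S').card = 1
  · rw [if_pos hcard]
    obtain ⟨e₀, he₀⟩ := Finset.card_eq_one.mp hcard
    have hmem : e₀ ∈ symmDiff S S' := by rw [he₀]; exact Finset.mem_singleton_self _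
    have hiff : ∀ f, f ≠ e₀ → (f ∈ S ↔ f ∈ S') := by
      intro f hf
      have hns : f ∉ symmDiff S S' := by rw [he₀]; simpa using hf
      rw [Finset.mem_symmDiff] at hns
      tauto
    rw [Finset.mem_symmDiff] at hmem
    have he₀E : e₀ ∈ G.edgeFinset := by
      rcases hmem with ⟨h, _⟩ | ⟨h, _⟩
      exacts [hSE h, hS'E h]
    have hd : ¬ e₀.IsDiag :=
      G.not_isDiag_of_mem_edgeSet (SimpleGraph.mem_edgeFinset.mp he₀E)
    have hkey : min 1 (piWRC G.edgeFinset p lam S' / piWRC G.edgeFinset p lam S) / 3 ≤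
        sbStep p lam S e₀ S' := by
      rcases hmem with ⟨heS, heS'⟩ | ⟨heS', heS⟩
      · -- removal : S = S' ∪ {e₀}
        have hST : S = S' ∪ {e₀} := by
          ext f
          by_cases hf : f = e₀
          · subst hf
            simp [heS]
          · rw [Finset.mem_union, Finset.mem_singleton]
            constructor
            · intro h
              exact Or.inl ((hiff f hf).mp h)
            · rintro (h | h)
              · exact (hiff f hf).mpr h
              · exact absurd h hf
        have := key_rem hp hlam hS'E he₀E heS' hd
        rw [← hST] at this
        exact this
      · -- addition : S' = S ∪ {e₀}
        have hST : S' = S ∪ {e₀} := by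
          ext f
          by_cases hf : f = e₀
          · subst hf
            simp [heS']
          · rw [Finset.mem_union, Finset.mem_singleton]
            constructor
            · intro h
              exact Or.inl ((hiff f hf).mpr h)
            · rintro (h | h)
              · exact (hiff f hf).mp h
              · exact absurd h hf
        have := key_add hp hlam hSE he₀E heS hd
        rw [← hST] at this
        exact this
    calc 1 / (2 * (G.edgeFinset.card : ℝ)) *
          min 1 (piWRC G.edgeFinset p lam S' / piWRC G.edgeFinset p lam S) / 3
        = 1 / (2 * (G.edgeFinset.card : ℝ)) *
          (min 1 (piWRC G.edgeFinset p lam S' / piWRC G.edgeFinset p lam S) / 3) := by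
          ring
      _ ≤ 1 / (2 * (G.edgeFinset.card : ℝ)) * ∑ e ∈ G.edgeFinset, sbStep p lam S e S' := by
          refine mul_le_mul_of_nonneg_left ?_ hc0
          exact hkey.trans (Finset.single_le_sum hsum_nonneg he₀E)
  · rw [if_neg hcard, zero_div]
    exact mul_nonneg hc0 (Finset.sum_nonneg hsum_nonneg)
end
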